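/- Let p₁, …, pₙ be points in ℝ² and for a unit vector v ∈ ℝ² define G(v) = inf_{b ∈ ℝ} Σᵢ (⟨pᵢ, v⟩ − b)². If v₁ and v₂ are unit vectors with v₁ ≠ v₂ and v₁ ≠ −v₂ such that G(v₁) = G(v₂) = inf{G(w) : w a unit vector}, then G(v) = G(v₁) for every unit vector v. -/

import Mathlib

set_option maxHeartbeats 800000

open scoped RealInnerProductSpace

lemma aux_inf (n : ℕ) (a : Fin n → ℝ) :
    (⨅ b : ℝ, ∑ i, (a i - b) ^ 2) = ∑ i, (a i - (∑ j, a j) / n) ^ 2 := by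
  rcases Nat.eq_zero_or_pos n with h0 | hn
  · subst h0; simp
  have hn' : (n : ℝ) ≠ 0 := Nat.cast_ne_zero.mpr hn.ne'
  set m : ℝ := (∑ j, a j) / n with hm
  have hsum : ∑ i, (a i - m) = 0 := by
    rw [Finset.sum_sub_distrib, Finset.sum_const, Finset.card_univ, Fintype.card_fin]
    have hnm : (n : ℝ) * m = ∑ j, a j := by rw [hm]; field_simp
    rw [nsmul_eq_mul, hnm, sub_self]
  have key : ∀ b : ℝ, ∑ i, (a i - b) ^ 2
      = (∑ i, (a i - m) ^ 2) + 2 * (m - b) * (∑ i, (a i - m)) + n * (m - b) ^ 2 := by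
    intro b
    rw [Finset.mul_sum]
    rw [show (n : ℝ) * (m - b) ^ 2 = ∑ _i : Fin n, (m - b) ^ 2 by
      rw [Finset.sum_const, Finset.card_univ, Fintype.card_fin, nsmul_eq_mul]]
    rw [← Finset.sum_add_distrib, ← Finset.sum_add_distrib]
    exact Finset.sum_congr rfl fun i _ => by ring
  apply le_antisymm
  · have := ciInf_le (f := fun b : ℝ => ∑ i, (a i - b) ^ 2)
      ⟨0, by rintro x ⟨b, rfl⟩; exact Finset.sum_nonneg fun i _ => sq_nonneg _⟩ m
    simpa using this
  · refine le_ciInf fun b => ?_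
    rw [key b, hsum]
    have : (0:ℝ) ≤ (n : ℝ) * (m - b) ^ 2 :=
      mul_nonneg (Nat.cast_nonneg n) (sq_nonneg _)
    linarith

theorem stmt_2 (n : ℕ) (p : Fin n → EuclideanSpace ℝ (Fin 2))
    (G : EuclideanSpace ℝ (Fin 2) → ℝ)
    (hG : ∀ v, G v = ⨅ b : ℝ, ∑ i, (⟪p i, v⟫ - b) ^ 2)
    (v₁ v₂ : EuclideanSpace ℝ (Fin 2))
    (hv₁ : ‖v₁‖ = 1) (hv₂ : ‖v₂‖ = 1)
    (hne : v₁ ≠ v₂) (hne' : v₁ ≠ -v₂)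
    (heq : G v₁ = G v₂)
    (hmin : ∀ w : EuclideanSpace ℝ (Fin 2), ‖w‖ = 1 → G v₁ ≤ G w) :
    ∀ v : EuclideanSpace ℝ (Fin 2), ‖v‖ = 1 → G v = G v₁ := by
  classical
  -- the centered residuals
  set r : EuclideanSpace ℝ (Fin 2) → Fin n → ℝ :=
    fun v i => ⟪p i, v⟫ - (∑ j, ⟪p j, v⟫) / n with hrdef
  set Q : EuclideanSpace ℝ (Fin 2) → ℝ := fun v => ∑ i, (r v i) ^ 2 with hQdef
  have hGQ : ∀ v, G v = Q v := fun v => by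
    rw [hG v, aux_inf n (fun i => ⟪p i, v⟫)]
  -- linearity of r
  have hr_lin : ∀ (c s : ℝ) (u w : EuclideanSpace ℝ (Fin 2)) (i : Fin n),
      r (c • u + s • w) i = c * r u i + s * r w i := by
    intro c s u w i
    simp only [hrdef, inner_add_right, real_inner_smul_right, Finset.sum_add_distrib,
      ← Finset.mul_sum]
    ring
  -- expansion of Q along a two-dimensional direction
  have hQ_exp : ∀ (c s : ℝ) (u w : EuclideanSpace ℝ (Fin 2)),
      Q (c • u + s • w)
        = c ^ 2 * Q u + 2 * c * s * (∑ i, r u i * r w i) + s ^ 2 * Q w := by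
    intro c s u w
    calc Q (c • u + s • w) = ∑ i, (c * r u i + s * r w i) ^ 2 :=
          Finset.sum_congr rfl fun i _ => by rw [hr_lin]
      _ = ∑ i, (c ^ 2 * (r u i) ^ 2 + 2 * c * s * (r u i * r w i) + s ^ 2 * (r w i) ^ 2) :=
          Finset.sum_congr rfl fun i _ => by ring
      _ = _ := by
          rw [Finset.sum_add_distrib, Finset.sum_add_distrib, ← Finset.mul_sum,
            ← Finset.mul_sum, ← Finset.mul_sum]
  -- coordinates of v₁
  set A : ℝ := v₁ 0 with hA
  set B : ℝ := v₁ 1 with hB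
  have hnorm_sq : ∀ x : EuclideanSpace ℝ (Fin 2), ‖x‖ = 1 → (x 0) ^ 2 + (x 1) ^ 2 = 1 := by
    intro x hx
    have h := hx
    rw [EuclideanSpace.norm_eq, Real.sqrt_eq_one] at h
    simpa [Fin.sum_univ_two, sq_abs, Real.norm_eq_abs] using h
  have hAB : A ^ 2 + B ^ 2 = 1 := hnorm_sq v₁ hv₁
  -- orthogonal unit vector
  set w : EuclideanSpace ℝ (Fin 2) := (WithLp.equiv 2 (Fin 2 → ℝ)).symm ![-B, A] with hwdef
  have hw0 : w 0 = -B := rfl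
  have hw1 : w 1 = A := rfl
  have hwnorm : ‖w‖ = 1 := by
    rw [EuclideanSpace.norm_eq]
    rw [show (∑ i, ‖w i‖ ^ 2) = A ^ 2 + B ^ 2 by
      simp [Fin.sum_univ_two, hw0, hw1, sq_abs, Real.norm_eq_abs]; ring]
    rw [hAB, Real.sqrt_one]
  -- decomposition of any unit vector
  have hdecomp : ∀ v : EuclideanSpace ℝ (Fin 2), ‖v‖ = 1 →
      ∃ c s : ℝ, c ^ 2 + s ^ 2 = 1 ∧ v = c • v₁ + s • w := by
    intro v hv
    have hv2 := hnorm_sq v hv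
    refine ⟨v 0 * A + v 1 * B, -(v 0) * B + v 1 * A, by nlinarith [hAB], ?_⟩
    ext i
    fin_cases i
    · show v 0 = _
      simp only [PiLp.add_apply, PiLp.smul_apply, smul_eq_mul, hw0]
      show v 0 = (v 0 * A + v 1 * B) * A + (-(v 0) * B + v 1 * A) * (-B)
      linear_combination (-(v 0)) * hAB
    · show v 1 = _
      simp only [PiLp.add_apply, PiLp.smul_apply, smul_eq_mul, hw1]
      show v 1 = (v 0 * A + v 1 * B) * B + (-(v 0) * B + v 1 * A) * A
      linear_combination (-(v 1)) * hAB
  -- norm of combinations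
  have hcomb_norm : ∀ c s : ℝ, c ^ 2 + s ^ 2 = 1 → ‖c • v₁ + s • w‖ = 1 := by
    intro c s hcs
    rw [EuclideanSpace.norm_eq]
    rw [show (∑ i, ‖(c • v₁ + s • w) i‖ ^ 2) = (c * A + s * (-B)) ^ 2 + (c * B + s * A) ^ 2 by
      simp [Fin.sum_univ_two, PiLp.add_apply, PiLp.smul_apply, smul_eq_mul, hw0, hw1,
        sq_abs, Real.norm_eq_abs, ← hA, ← hB]]
    rw [show (c * A + s * (-B)) ^ 2 + (c * B + s * A) ^ 2 = 1 by nlinarith [hAB, hcs]]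
    exact Real.sqrt_one
  -- abbreviations
  set a : ℝ := Q v₁ with ha
  set b : ℝ := ∑ i, r v₁ i * r w i with hb
  set d : ℝ := Q w with hd
  have hkey : ∀ c s : ℝ, c ^ 2 + s ^ 2 = 1 →
      a ≤ c ^ 2 * a + 2 * c * s * b + s ^ 2 * d := by
    intro c s hcs
    have := hmin _ (hcomb_norm c s hcs)
    rw [hGQ, hGQ, hQ_exp] at this
    exact this
  have hda : a ≤ d := by have := hkey 0 1 (by ring); simpa using this
  -- cross term vanishes
  have hb0 : b = 0 := by
    by_contra hb0
    set e : ℝ := d - a with he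
    have he0 : 0 ≤ e := by linarith
    have habs : 0 < |b| := abs_pos.mpr hb0
    set t : ℝ := min (1/2) (|b| / (e + 1)) with ht
    have ht0 : 0 < t := lt_min (by norm_num) (div_pos habs (by linarith))
    have ht12 : t ≤ 1/2 := min_le_left _ _
    have hte : t * (e + 1) ≤ |b| := by
      have := min_le_right (1/2) (|b| / (e + 1))
      calc t * (e + 1) ≤ (|b| / (e + 1)) * (e + 1) := by
            apply mul_le_mul_of_nonneg_right this (by linarith)
        _ = |b| := by field_simp
    set c : ℝ := Real.sqrt (1 - t ^ 2) with hc
    have hc2 : c ^ 2 = 1 - t ^ 2 := Real.sq_sqrt (by nlinarith)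
    have hcpos : 1/2 ≤ c := by
      nlinarith [Real.sqrt_nonneg (1 - t ^ 2), hc2]
    rcases lt_or_gt_of_ne hb0 with hbneg | hbpos
    · -- b < 0, take s = t
      have hk := hkey c t (by rw [hc2]; ring)
      have habs' : |b| = -b := abs_of_neg hbneg
      have hde : d = a + e := by rw [he]; ring
      have hk' : a ≤ (1 - t ^ 2) * a + 2 * c * t * b + t ^ 2 * (a + e) := by
        rw [← hc2, ← hde]; exact hk
      have h2 : 2 * c * t * (-b) ≤ t ^ 2 * e := by nlinarith [hk']
      have h3 : -b ≤ t * e := by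
        have hnb : 0 < -b := by linarith
        nlinarith [h2, mul_pos ht0 hnb, hcpos, ht0]
      have hte' : t * e + t ≤ -b := by nlinarith [hte, habs']
      linarith [h3, hte', ht0]
    · -- b > 0, take s = -t
      have hk := hkey c (-t) (by rw [hc2]; ring)
      have habs' : |b| = b := abs_of_pos hbpos
      have hde : d = a + e := by rw [he]; ring
      have hk' : a ≤ (1 - t ^ 2) * a + 2 * c * (-t) * b + (-t) ^ 2 * (a + e) := by
        rw [← hc2, ← hde]; exact hk
      have h2 : 2 * c * t * b ≤ t ^ 2 * e := by nlinarith [hk']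
      have h3 : b ≤ t * e := by
        nlinarith [h2, mul_pos ht0 hbpos, hcpos, ht0]
      have hte' : t * e + t ≤ b := by nlinarith [hte, habs']
      linarith [h3, hte', ht0]
  -- v₂ forces d = a
  obtain ⟨c₂, s₂, hcs₂, hv₂dec⟩ := hdecomp v₂ hv₂
  have hs₂ : s₂ ≠ 0 := by
    intro hs0
    rw [hs0] at hcs₂ hv₂dec
    have hc₂ : c₂ = 1 ∨ c₂ = -1 := by
      have h2 : (c₂ - 1) * (c₂ + 1) = 0 := by nlinarith [hcs₂]
      rcases mul_eq_zero.mp h2 with h | h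
      · left; linarith
      · right; linarith
    rcases hc₂ with h1 | h1
    · apply hne; rw [hv₂dec, h1]; simp
    · apply hne'; rw [hv₂dec, h1]; simp
  have hQv₂ : Q v₂ = c₂ ^ 2 * a + s₂ ^ 2 * d := by
    rw [hv₂dec, hQ_exp, ← hb, hb0, ← ha, ← hd]; ring
  have hda' : d = a := by
    have hQQ : Q v₁ = Q v₂ := by rw [← hGQ, ← hGQ]; exact heq
    have h1 : a = c₂ ^ 2 * a + s₂ ^ 2 * d := by
      have h1' := hQv₂
      rw [← hQQ, ← ha] at h1'
      exact h1'
    have hs2pos : 0 < s₂ ^ 2 := by positivity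
    have h2 : s₂ ^ 2 * (d - a) = 0 := by linear_combination (-1) * h1 + (-a) * hcs₂
    rcases mul_eq_zero.mp h2 with h | h
    · exact absurd h hs2pos.ne'
    · linarith
  -- conclude
  intro v hv
  obtain ⟨c, s, hcs, hvdec⟩ := hdecomp v hv
  rw [hGQ, hGQ, hvdec, hQ_exp, ← hb, hb0, ← ha, ← hd, hda']
  linear_combination a * hcs
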